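/- Let k ≥ 2 and n ≥ 4 be integers and let H_{k,n} be the graph described in the context. Then the domination number and the total domination number of H_{k,n} both equal k, i.e. γ(H_{k,n}) = γ_t(H_{k,n}) = k. -/
import Mathlib


/-- Vertices of `H_{k,n}`: the clique vertices `y_j` (`Sum.inl`), the vertices
`z_{i,j}` (`Sum.inr (Sum.inl (i,j))`, 0-indexed), and the two vertices
`u = Sum.inr (Sum.inr false)` and `v = Sum.inr (Sum.inr true)`. -/
abbrev HknV (k n : ℕ) := Fin n ⊕ ((Fin (k - 1) × Fin n) ⊕ Bool)

/-- Edge relation of `H_{k,n}`: the `y`'s form a `K_n`; for each `i` the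
`z_{i,·}`'s form a `K_n` minus the edge `z_{i,1} z_{i,2}` (0-indexed: second
coordinates `0` and `1`); both `u` and `v` are adjacent to every `y_j` and to
`z_{i,1}`, `z_{i,2}` for every `i`; `u` and `v` are nonadjacent. -/
def HknRel (k n : ℕ) : HknV k n → HknV k n → Prop
  | .inl _, .inl _ => True
  | .inr (.inl p), .inr (.inl q) =>
      p.1 = q.1 ∧ ¬((p.2.val = 0 ∧ q.2.val = 1) ∨ (p.2.val = 1 ∧ q.2.val = 0))
  | .inr (.inr _), .inl _ => True
  | .inr (.inr _), .inr (.inl p) => p.2.val = 0 ∨ p.2.val = 1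
  | _, _ => False

/-- The graph `H_{k,n}`. -/
def Hkn (k n : ℕ) : SimpleGraph (HknV k n) := SimpleGraph.fromRel (HknRel k n)

/-- `D` is a dominating set of `G`. -/
def IsDomSet {V : Type*} (G : SimpleGraph V) (D : Finset V) : Prop :=
  ∀ v : V, v ∉ D → ∃ d ∈ D, G.Adj v d

/-- `D` is a total dominating set of `G`. -/
def IsTotalDomSet {V : Type*} (G : SimpleGraph V) (D : Finset V) : Prop :=
  ∀ v : V, ∃ d ∈ D, G.Adj v d

/-- The domination number and total domination number of `H_{k,n}` both
equal `k`. -/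
theorem stmt6 (k n : ℕ) (hk : 2 ≤ k) (hn : 4 ≤ n) :
    sInf {m : ℕ | ∃ D : Finset (HknV k n), IsDomSet (Hkn k n) D ∧ D.card = m} = k ∧
    sInf {m : ℕ | ∃ D : Finset (HknV k n), IsTotalDomSet (Hkn k n) D ∧ D.card = m} = k := by
  classical
  have hk1 : 0 < k - 1 := by omega
  set u : HknV k n := Sum.inr (Sum.inr false) with hu
  set z : Fin (k-1) → HknV k n := fun i => Sum.inr (Sum.inl (i, ⟨0, by omega⟩)) with hz
  set D : Finset (HknV k n) := insert u (Finset.univ.image z) with hD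
  have hzinj : Function.Injective z := by
    intro a b hab
    simpa [hz] using hab
  have hcard : D.card = k := by
    have h1 : u ∉ Finset.univ.image z := by simp [hz, hu]
    rw [hD, Finset.card_insert_of_notMem h1, Finset.card_image_of_injective _ hzinj]
    simp
    omega
  have htotal : IsTotalDomSet (Hkn k n) D := by
    intro x
    match x with
    | .inl j =>
      exact ⟨u, by simp [hD], by simp [Hkn, SimpleGraph.fromRel_adj, hu, HknRel]⟩
    | .inr (.inl (i, j)) =>
      by_cases hj : j.val ≤ 1
      · refine ⟨u, by simp [hD], ?_⟩
        simp [Hkn, SimpleGraph.fromRel_adj, hu, HknRel]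
        omega
      · refine ⟨z i, by simp [hD], ?_⟩
        simp [Hkn, SimpleGraph.fromRel_adj, hz, HknRel]
        constructor
        · intro h
          subst h
          simp at hj
        · omega
    | .inr (.inr b) =>
      refine ⟨z ⟨0, hk1⟩, by simp [hD], ?_⟩
      simp [Hkn, SimpleGraph.fromRel_adj, hz, HknRel]
  have hdom : IsDomSet (Hkn k n) D := fun v _ => htotal v
  have hlow : ∀ E : Finset (HknV k n), IsDomSet (Hkn k n) E → k ≤ E.card := by
    intro E hE
    set c : HknV k n → Fin k := fun x => match x with
      | .inl _ => ⟨k-1, by omega⟩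
      | .inr (.inl p) => ⟨p.1.val, by have := p.1.isLt; omega⟩
      | .inr (.inr _) => ⟨k-1, by omega⟩ with hc
    have hsurj : ∀ i : Fin k, ∃ d ∈ E, c d = i := by
      intro i
      by_cases hi : i.val < k - 1
      · set w : HknV k n := Sum.inr (Sum.inl (⟨i.val, hi⟩, ⟨2, by omega⟩)) with hw
        by_cases hwE : w ∈ E
        · exact ⟨w, hwE, by simp [hc, hw]⟩
        · obtain ⟨d, hd, hadj⟩ := hE w hwE
          refine ⟨d, hd, ?_⟩
          match d with
          | .inl _ =>
            simp [Hkn, SimpleGraph.fromRel_adj, HknRel, hw] at hadj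
          | .inr (.inr _) =>
            simp [Hkn, SimpleGraph.fromRel_adj, HknRel, hw] at hadj
          | .inr (.inl p) =>
            have h1 : p.1.val = i.val := by
              rw [Hkn, SimpleGraph.fromRel_adj] at hadj
              rcases hadj.2 with h | h
              · have := h.1
                exact congrArg Fin.val this.symm
              · have := h.1
                exact congrArg Fin.val this
            simp [hc, h1]
      · have hi' : i.val = k - 1 := by have := i.isLt; omega
        set w : HknV k n := Sum.inl (⟨0, by omega⟩ : Fin n) with hw
        by_cases hwE : w ∈ E
        · exact ⟨w, hwE, by simp [hc, hw]; exact Fin.ext hi'.symm⟩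
        · obtain ⟨d, hd, hadj⟩ := hE w hwE
          refine ⟨d, hd, ?_⟩
          match d with
          | .inl _ => exact Fin.ext (by simp [hc]; omega)
          | .inr (.inr _) => exact Fin.ext (by simp [hc]; omega)
          | .inr (.inl p) =>
            exfalso
            simp [Hkn, SimpleGraph.fromRel_adj, HknRel, hw] at hadj
    have hle : (Finset.univ : Finset (Fin k)).card ≤ E.card := by
      apply Finset.card_le_card_of_surjOn c
      intro i _
      obtain ⟨d, hd, hcd⟩ := hsurj i
      exact ⟨d, hd, hcd⟩
    simpa using hle
  have hmem1 : k ∈ {m : ℕ | ∃ D : Finset (HknV k n), IsDomSet (Hkn k n) D ∧ D.card = m} :=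
    ⟨D, hdom, hcard⟩
  have hmem2 : k ∈ {m : ℕ | ∃ D : Finset (HknV k n), IsTotalDomSet (Hkn k n) D ∧ D.card = m} :=
    ⟨D, htotal, hcard⟩
  constructor
  · refine le_antisymm (Nat.sInf_le hmem1) (le_csInf ⟨k, hmem1⟩ ?_)
    rintro m ⟨E, hE, rfl⟩
    exact hlow E hE
  · refine le_antisymm (Nat.sInf_le hmem2) (le_csInf ⟨k, hmem2⟩ ?_)
    rintro m ⟨E, hE, rfl⟩
    exact hlow E (fun v _ => hE v)
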